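/- Under the platoon control law ẋ_i = k·T_{d(i)w̄}(Σ_{j:(i,j)∈E}(x_j − x_i + w_{ji} − D_{ji})) with bounded disturbances |w_{ji}| ≤ w̄ and realizable distances D_{ji} = p_j − p_i, the limit x* of the trajectory satisfies |Σ_{j:(i,j)∈E}(x*_j − x*_i − D_{ji})| ≤ 2 d(i) w̄ for every agent i. -/
import Mathlib


open MeasureTheory Set Filter

def ACWithDeriv {E : Type*} [NormedAddCommGroup E] [NormedSpace ℝ E]
    (f f' : ℝ → E) : Prop :=
  (∀ a b, 0 ≤ a → 0 ≤ b → IntervalIntegrable f' volume a b) ∧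
  ∀ t, 0 ≤ t → f t = f 0 + ∫ s in (0:ℝ)..t, f' s

/-- If `f' ≥ c > 0` a.e. on `[T0, ∞)` then `f` cannot converge. -/
lemma escape_lemma (f f' : ℝ → ℝ)
    (hint : ∀ a b, 0 ≤ a → 0 ≤ b → IntervalIntegrable f' volume a b)
    (hFTC : ∀ t, 0 ≤ t → f t = f 0 + ∫ s in (0:ℝ)..t, f' s)
    (T0 c L : ℝ) (hT0 : 0 ≤ T0) (hc : 0 < c)
    (hlb : ∀ᵐ t ∂volume, t ∈ Ici T0 → c ≤ f' t)
    (hf : Tendsto f atTop (nhds L)) : False := by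
  have key : ∀ t, T0 ≤ t → f T0 + c * (t - T0) ≤ f t := by
    intro t ht
    have ht0 : 0 ≤ t := hT0.trans ht
    have h1 := hFTC t ht0
    have h2 := hFTC T0 hT0
    have hsub : f t - f T0 = ∫ s in T0..t, f' s := by
      rw [h1, h2]
      have := intervalIntegral.integral_interval_sub_left
        (hint 0 t le_rfl ht0) (hint 0 T0 le_rfl hT0)
      linarith [this]
    have hmono : (∫ s in T0..t, (c : ℝ)) ≤ ∫ s in T0..t, f' s := by
      apply intervalIntegral.integral_mono_ae_restrict ht
        intervalIntegrable_const (hint T0 t hT0 ht0)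
      have : ∀ᵐ s ∂(volume.restrict (Icc T0 t)), s ∈ Ici T0 → c ≤ f' s :=
        ae_restrict_of_ae hlb
      filter_upwards [this, ae_restrict_mem measurableSet_Icc] with s hs hmem
      exact hs hmem.1
    rw [intervalIntegral.integral_const, smul_eq_mul] at hmono
    linarith [hsub ▸ hmono]
  have htop : Tendsto f atTop atTop := by
    apply tendsto_atTop_mono' _ ((eventually_ge_atTop T0).mono fun t ht => key t ht)
    have : Tendsto (fun t : ℝ => f T0 + c * (t - T0)) atTop atTop := by
      apply tendsto_atTop_add_const_left
      exact (tendsto_atTop_add_const_right _ _ tendsto_id).const_mul_atTop hc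
    exact this
  exact not_tendsto_atTop_of_tendsto_nhds hf htop

/-- under the platoon control law with bounded disturbances and realizable
distances, the limit `x*` of the trajectory satisfies
`|Σ_{j:(i,j)∈E}(x*ⱼ − x*ᵢ − D_{ji})| ≤ 2 d(i) w̄` for every agent `i`. -/
theorem platoon_limit_error_bound (n : ℕ)
    (G : SimpleGraph (Fin n)) [DecidableRel G.Adj] (hconn : G.Connected)
    (wbar : ℝ) (hwbar : 0 < wbar) (k : ℝ) (hk : 0 < k)
    (p : Fin n → ℝ)
    (T : ℝ → ℝ → ℝ)
    (hTmono : ∀ w, Monotone (T w))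
    (hTzero : ∀ w s, 0 < w → (T w s = 0 ↔ |s| ≤ w))
    (w : ℝ → Fin n → Fin n → ℝ)
    (hwmeas : ∀ j i, Measurable (fun t => w t j i))
    (hwbdd : ∀ t, 0 ≤ t → ∀ j i, |w t j i| ≤ wbar)
    (x x' : ℝ → Fin n → ℝ) (hx : ACWithDeriv x x')
    (hode : ∀ᵐ t ∂volume, t ∈ Ici (0:ℝ) → ∀ i,
      x' t i = k * T ((G.degree i : ℝ) * wbar)
        (∑ j ∈ G.neighborFinset i, (x t j - x t i + w t j i - (p j - p i))))
    (xstar : Fin n → ℝ) (hlim : Tendsto x atTop (nhds xstar)) :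
    ∀ i, |∑ j ∈ G.neighborFinset i, (xstar j - xstar i - (p j - p i))|
      ≤ 2 * (G.degree i : ℝ) * wbar := by
  intro i
  by_cases hdeg : G.degree i = 0
  · have hN : G.neighborFinset i = ∅ := by
      rwa [← Finset.card_eq_zero, G.card_neighborFinset_eq_degree]
    simp [hN, hdeg]
  -- main case
  set d : ℝ := (G.degree i : ℝ) with hd
  have hdpos : 0 < d := by
    have : 0 < G.degree i := Nat.pos_of_ne_zero hdeg
    rw [hd]; exact_mod_cast this
  have hdw : 0 < d * wbar := mul_pos hdpos hwbar
  set Ss : ℝ := ∑ j ∈ G.neighborFinset i, (xstar j - xstar i - (p j - p i)) with hSs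
  by_contra hcon
  push_neg at hcon
  -- convergence of the drift sum
  have hcoord : ∀ j, Tendsto (fun t => x t j) atTop (nhds (xstar j)) :=
    fun j => tendsto_pi_nhds.mp hlim j
  have hg : Tendsto (fun t => ∑ j ∈ G.neighborFinset i, (x t j - x t i - (p j - p i)))
      atTop (nhds Ss) := by
    apply tendsto_finset_sum
    intro j _
    exact ((hcoord j).sub (hcoord i)).sub tendsto_const_nhds
  -- coordinate FTC
  have hintc : ∀ a b, 0 ≤ a → 0 ≤ b →
      IntervalIntegrable (fun t => x' t i) volume a b := by
    intro a b ha hb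
    have h := hx.1 a b ha hb
    exact ⟨(ContinuousLinearMap.proj (R := ℝ) (φ := fun _ : Fin n => ℝ) i).integrable_comp h.1,
      (ContinuousLinearMap.proj (R := ℝ) (φ := fun _ : Fin n => ℝ) i).integrable_comp h.2⟩
  have hFTCc : ∀ t, 0 ≤ t → x t i = x 0 i + ∫ s in (0:ℝ)..t, x' s i := by
    intro t ht
    have h := congrFun (hx.2 t ht) i
    have hcomm := (ContinuousLinearMap.proj (R := ℝ) (φ := fun _ : Fin n => ℝ) i
      ).intervalIntegral_comp_comm (hx.1 0 t le_rfl ht)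
    simp only [ContinuousLinearMap.proj_apply] at hcomm
    rw [h]
    simp [hcomm]
  -- sum splitting
  have hsplit : ∀ t, (∑ j ∈ G.neighborFinset i, (x t j - x t i + w t j i - (p j - p i)))
      = (∑ j ∈ G.neighborFinset i, (x t j - x t i - (p j - p i)))
        + ∑ j ∈ G.neighborFinset i, w t j i := by
    intro t
    rw [← Finset.sum_add_distrib]
    exact Finset.sum_congr rfl fun j _ => by ring
  have hwsum : ∀ t, 0 ≤ t → |∑ j ∈ G.neighborFinset i, w t j i| ≤ d * wbar := by
    intro t ht
    calc |∑ j ∈ G.neighborFinset i, w t j i|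
        ≤ ∑ j ∈ G.neighborFinset i, |w t j i| := Finset.abs_sum_le_sum_abs _ _
      _ ≤ ∑ _j ∈ G.neighborFinset i, wbar :=
          Finset.sum_le_sum fun j _ => hwbdd t ht j i
      _ = d * wbar := by
          rw [Finset.sum_const, G.card_neighborFinset_eq_degree, nsmul_eq_mul]
  have hTz1 : T (d * wbar) (d * wbar) = 0 :=
    (hTzero _ _ hdw).mpr (by rw [abs_of_pos hdw])
  have hTz2 : T (d * wbar) (-(d * wbar)) = 0 :=
    (hTzero _ _ hdw).mpr (by rw [abs_neg, abs_of_pos hdw])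
  rcases lt_or_ge Ss 0 with hsign | hsign
  · -- Ss < -2 d wbar : x i escapes to -∞
    have hSneg : Ss < -(2 * d * wbar) := by
      rw [abs_of_nonpos hsign.le] at hcon; linarith
    set ε : ℝ := (-Ss - 2 * d * wbar) / 2 with hε
    have hεpos : 0 < ε := by simp only [hε]; linarith
    have hev : ∀ᶠ t in atTop,
        (∑ j ∈ G.neighborFinset i, (x t j - x t i - (p j - p i))) < Ss + ε :=
      hg.eventually (eventually_lt_nhds (by linarith))
    obtain ⟨T1, hT1⟩ := eventually_atTop.mp hev
    set T0 : ℝ := max T1 0 with hT0def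
    have hT0 : 0 ≤ T0 := le_max_right _ _
    set c0 : ℝ := T (d * wbar) (-(d * wbar) - ε) with hc0def
    have hc0 : c0 < 0 := by
      have hle : c0 ≤ 0 := hTz2 ▸ hTmono (d * wbar) (by linarith : -(d*wbar) - ε ≤ -(d*wbar))
      have hne : c0 ≠ 0 := by
        rw [hc0def, Ne, hTzero _ _ hdw, abs_of_nonpos (by linarith), not_le]
        linarith
      exact lt_of_le_of_ne hle hne
    have hlb : ∀ᵐ t ∂volume, t ∈ Ici T0 → k * (-c0) ≤ -(x' t i) := by
      filter_upwards [hode] with t hode_t ht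
      have ht0 : (0:ℝ) ≤ t := hT0.trans ht
      have hS : (∑ j ∈ G.neighborFinset i, (x t j - x t i + w t j i - (p j - p i)))
          ≤ -(d * wbar) - ε := by
        rw [hsplit t]
        have h1 := hT1 t ((le_max_left _ _).trans ht)
        have h2 := (abs_le.mp (hwsum t ht0)).2
        linarith
      have := hode_t ht0 i
      have hTle : T (d * wbar) _ ≤ c0 := hTmono (d * wbar) hS
      nlinarith [hTmono (d * wbar) hS]
    exact escape_lemma (fun t => -(x t i)) (fun t => -(x' t i))
      (fun a b ha hb => (hintc a b ha hb).neg)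
      (fun t ht => by
        show -(x t i) = -(x 0 i) + ∫ s in (0:ℝ)..t, -(x' s i)
        rw [intervalIntegral.integral_neg]; have := hFTCc t ht; linarith)
      T0 (k * (-c0)) (-(xstar i)) hT0 (by nlinarith) hlb (hcoord i).neg
  · -- Ss > 2 d wbar : x i escapes to +∞
    have hSpos : 2 * d * wbar < Ss := by rwa [abs_of_nonneg hsign] at hcon
    set ε : ℝ := (Ss - 2 * d * wbar) / 2 with hε
    have hεpos : 0 < ε := by simp only [hε]; linarith
    have hev : ∀ᶠ t in atTop,
        Ss - ε < (∑ j ∈ G.neighborFinset i, (x t j - x t i - (p j - p i))) :=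
      hg.eventually (eventually_gt_nhds (by linarith))
    obtain ⟨T1, hT1⟩ := eventually_atTop.mp hev
    set T0 : ℝ := max T1 0 with hT0def
    have hT0 : 0 ≤ T0 := le_max_right _ _
    set c0 : ℝ := T (d * wbar) (d * wbar + ε) with hc0def
    have hc0 : 0 < c0 := by
      have hle : 0 ≤ c0 := hTz1 ▸ hTmono (d * wbar) (by linarith : d*wbar ≤ d*wbar + ε)
      have hne : c0 ≠ 0 := by
        rw [hc0def, Ne, hTzero _ _ hdw, abs_of_nonneg (by linarith), not_le]
        linarith
      exact lt_of_le_of_ne hle (Ne.symm hne)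
    have hlb : ∀ᵐ t ∂volume, t ∈ Ici T0 → k * c0 ≤ x' t i := by
      filter_upwards [hode] with t hode_t ht
      have ht0 : (0:ℝ) ≤ t := hT0.trans ht
      have hS : d * wbar + ε
          ≤ (∑ j ∈ G.neighborFinset i, (x t j - x t i + w t j i - (p j - p i))) := by
        rw [hsplit t]
        have h1 := hT1 t ((le_max_left _ _).trans ht)
        have h2 := (abs_le.mp (hwsum t ht0)).1
        linarith
      have := hode_t ht0 i
      nlinarith [hTmono (d * wbar) hS]
    exact escape_lemma (fun t => x t i) (fun t => x' t i) hintc hFTCc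
      T0 (k * c0) (xstar i) hT0 (by positivity) hlb (hcoord i)
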